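/- arXiv:2602.13839 — 5 statements merged into one kernel-verified Lean document; each statement's English description precedes it below -/
import Mathlib

section
/- Let x : Z/nZ → Z/2Z and i ∈ Z/nZ. If at least two of the three sites i-1, i, i+1 are deterministic for x, then for any configuration y satisfying y_j = x_{j-1} ⊕ x_j at every deterministic site j, the triple (y_{i-1}, y_i, y_{i+1}) is admissible, i.e., it is neither (0,1,0) nor (1,0,1). -/
/-- Site `j` is deterministic for `x` if its outer neighbors agree. -/
def IsDet (n : ℕ) (x : ZMod n → ZMod 2) (j : ZMod n) : Prop :=
  x (j - 1) = x (j + 1)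

/-- A triple is admissible if it is neither `(0,1,0)` nor `(1,0,1)`. -/
def Admissible (a b c : ZMod 2) : Prop :=
  ¬ ((a, b, c) = ((0 : ZMod 2), (1 : ZMod 2), (0 : ZMod 2)) ∨
     (a, b, c) = ((1 : ZMod 2), (0 : ZMod 2), (1 : ZMod 2)))

/-- Lemma 1: if at least two of the sites `i-1, i, i+1` are deterministic for `x`,
then the updated triple `(y (i-1), y i, y (i+1))` is admissible. -/
theorem det_no_forbidden (n : ℕ) (hn : 5 ≤ n) (x y : ZMod n → ZMod 2) (i : ZMod n)
    (htwo : (IsDet n x (i - 1) ∧ IsDet n x i) ∨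
            (IsDet n x i ∧ IsDet n x (i + 1)) ∨
            (IsDet n x (i - 1) ∧ IsDet n x (i + 1)))
    (hy : ∀ j : ZMod n, IsDet n x j → y j = x (j - 1) + x j) :
    Admissible (y (i - 1)) (y i) (y (i + 1)) := by
  have adm_ab : ∀ a b c : ZMod 2, a = b → Admissible a b c := by simp only [Admissible]; decide
  have adm_bc : ∀ a b c : ZMod 2, b = c → Admissible a b c := by simp only [Admissible]; decide
  have adm_ac : ∀ a b c : ZMod 2, a ≠ c → Admissible a b c := by simp only [Admissible]; decide
  rcases htwo with ⟨h1, h2⟩ | ⟨h2, h3⟩ | ⟨h1, h3⟩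
  · -- det at i-1 and i : y(i-1) = y i
    apply adm_ab
    have e1 := hy _ h1
    have e2 := hy _ h2
    have h1' : x (i - 1 - 1) = x i := by simpa [IsDet, sub_add_cancel] using h1
    rw [e1, e2, h1']
    ring
  · -- det at i and i+1 : y i = y(i+1)
    apply adm_bc
    have e2 := hy _ h2
    have e3 := hy _ h3
    have h2' : x (i - 1) = x (i + 1) := h2
    simp only [add_sub_cancel_right] at e3
    rw [e2, e3, h2']
    ring
  · by_cases hdi : IsDet n x i
    · -- use det at i-1 and i : y(i-1) = y i
      apply adm_ab
      have e1 := hy _ h1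
      have e2 := hy _ hdi
      have h1' : x (i - 1 - 1) = x i := by simpa [IsDet, sub_add_cancel] using h1
      rw [e1, e2, h1']
      ring
    · -- i not deterministic : x(i-1) ≠ x(i+1), so y(i-1) ≠ y(i+1)
      apply adm_ac
      have e1 := hy _ h1
      have e3 := hy _ h3
      have h1' : x (i - 1 - 1) = x i := by simpa [IsDet, sub_add_cancel] using h1
      have h3' : x i = x (i + 1 + 1) := by simpa [IsDet, add_sub_cancel_right] using h3
      simp only [add_sub_cancel_right] at e3
      rw [e1, e3, h1']
      intro hcon
      apply hdi
      have : x (i - 1) = x (i + 1) := by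
        have := add_left_cancel hcon
        exact this
      exact this
end

section
/- Let x : Z/nZ → Z/2Z, n ≥ 5. There exists a choice of values y_1, ..., y_{n-2} ∈ Z/2Z with y_j = x_{j-1} ⊕ x_j for every deterministic site j ∈ {1,...,n-2}, such that for every i ∈ {2,...,n-3} the triple (y_{i-1}, y_i, y_{i+1}) is admissible (not equal to (0,1,0) or (1,0,1)). -/
instance (n : ℕ) (x : ZMod n → ZMod 2) (j : ZMod n) : Decidable (IsDet n x j) := by
  unfold IsDet; infer_instance

instance (a b c : ZMod 2) : Decidable (Admissible a b c) := by
  unfold Admissible; infer_instance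

/-- Sequential construction of `y`. -/
def seqY (n : ℕ) (x : ZMod n → ZMod 2) : ℕ → ZMod 2
  | 0 => 0
  | (j + 1) =>
    if IsDet n x ((j + 1 : ℕ) : ZMod n) then
      x ((j : ℕ) : ZMod n) + x (((j + 1 : ℕ)) : ZMod n)
    else seqY n x j

/-- Lemma 2: there is a choice of values `y 1, …, y (n-2)` respecting the
deterministic updates on `{1,…,n-2}` such that every triple centered in
`{2,…,n-3}` is admissible. -/
theorem interval_admissible (n : ℕ) (hn : 5 ≤ n) (x : ZMod n → ZMod 2) :
    ∃ y : ZMod n → ZMod 2,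
      (∀ j : ℕ, 1 ≤ j → j ≤ n - 2 → IsDet n x (j : ZMod n) →
        y (j : ZMod n) = x ((j : ZMod n) - 1) + x (j : ZMod n)) ∧
      (∀ i : ℕ, 2 ≤ i → i ≤ n - 3 →
        Admissible (y ((i : ZMod n) - 1)) (y (i : ZMod n)) (y ((i : ZMod n) + 1))) := by
  haveI : NeZero n := ⟨by omega⟩
  have adm1 : ∀ a b c : ZMod 2, a = b → Admissible a b c := by decide
  have adm2 : ∀ a b c : ZMod 2, b = c → Admissible a b c := by decide
  set f : ℕ → ZMod 2 := seqY n x with hf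
  have funf : ∀ j : ℕ, f (j + 1) = if IsDet n x ((j + 1 : ℕ) : ZMod n) then
      x ((j : ℕ) : ZMod n) + x (((j + 1 : ℕ)) : ZMod n) else f j := by
    intro j; rw [hf]; rfl
  have fdet : ∀ j : ℕ, 1 ≤ j → IsDet n x (j : ZMod n) →
      f j = x ((j : ZMod n) - 1) + x (j : ZMod n) := by
    intro j hj hdet
    obtain ⟨k, rfl⟩ : ∃ k, j = k + 1 := ⟨j - 1, by omega⟩
    have : ((k : ℕ) : ZMod n) = ((k + 1 : ℕ) : ZMod n) - 1 := by push_cast; ring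
    rw [funf, if_pos hdet, this]
  have fstep : ∀ j : ℕ, 1 ≤ j → IsDet n x (j : ZMod n) → f (j + 1) = f j := by
    intro j hj hdet
    rw [funf]
    by_cases h : IsDet n x ((j + 1 : ℕ) : ZMod n)
    · rw [if_pos h, fdet j hj hdet]
      have hd : x ((j : ZMod n) - 1) = x ((j : ZMod n) + 1) := hdet
      have : (((j + 1 : ℕ)) : ZMod n) = (j : ZMod n) + 1 := by push_cast; ring
      rw [this, ← hd, add_comm]
    · rw [if_neg h]
  have ffree : ∀ j : ℕ, ¬ IsDet n x ((j + 1 : ℕ) : ZMod n) → f (j + 1) = f j := by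
    intro j h
    rw [funf, if_neg h]
  refine ⟨fun z => f z.val, ?_, ?_⟩
  · intro j hj1 hj2 hdet
    have hjn : j < n := by omega
    show f ((j : ZMod n)).val = _
    rw [show ((j : ZMod n)).val = j from ZMod.val_natCast_of_lt hjn]
    exact fdet j hj1 hdet
  · intro i hi1 hi2
    have h1 : (i : ZMod n) - 1 = ((i - 1 : ℕ) : ZMod n) := by
      have : (i : ℕ) = (i - 1) + 1 := by omega
      rw [this]; push_cast; ring
    have h2 : (i : ZMod n) + 1 = ((i + 1 : ℕ) : ZMod n) := by push_cast; ring
    show Admissible (f ((i : ZMod n) - 1).val) (f ((i : ZMod n)).val) (f ((i : ZMod n) + 1).val)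
    rw [h1, h2,
      show (((i - 1 : ℕ) : ZMod n)).val = i - 1 from ZMod.val_natCast_of_lt (by omega),
      show (((i : ℕ) : ZMod n)).val = i from ZMod.val_natCast_of_lt (by omega),
      show (((i + 1 : ℕ) : ZMod n)).val = i + 1 from ZMod.val_natCast_of_lt (by omega)]
    by_cases h : IsDet n x (i : ZMod n)
    · exact adm2 _ _ _ (fstep i (by omega) h).symm
    · refine adm1 _ _ _ ?_
      have : (i - 1) + 1 = i := by omega
      rw [← this] at h ⊢
      exact (ffree (i - 1) h).symm
end

section
/- Consider the Markov chain on configurations X_n = (Z/2Z)^(Z/nZ), n ≥ 5, given by the λ=1/2 diploid PCA: at each step, independently at each site i, the new value is x_{i-1} ⊕ x_i if x_{i-1} = x_{i+1}, and a fair coin flip otherwise. Then for every initial configuration x, the probability that the chain is at the all-zero configuration after 4 steps is strictly positive. -/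
open Finset

/-- One-site update probability of the λ = 1/2 diploid PCA of ECA 60 and 102. -/
noncomputable def pLoc (n : ℕ) (x : ZMod n → ZMod 2) (i : ZMod n) (b : ZMod 2) : ℝ :=
  if x (i - 1) = x (i + 1) then (if b = x (i - 1) + x i then 1 else 0) else 1 / 2

/-- Transition probability of the PCA: product of one-site probabilities. -/
noncomputable def ptrans (n : ℕ) [NeZero n] (x y : ZMod n → ZMod 2) : ℝ :=
  ∏ i : ZMod n, pLoc n x i (y i)

/-- Four-step transition probability. -/
noncomputable def ptrans4 (n : ℕ) [NeZero n] (x y : ZMod n → ZMod 2) : ℝ :=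
  ∑ a : ZMod n → ZMod 2, ∑ b : ZMod n → ZMod 2, ∑ c : ZMod n → ZMod 2,
    ptrans n x a * ptrans n a b * ptrans n b c * ptrans n c y

lemma zmod2_add_self : ∀ z : ZMod 2, z + z = 0 := by decide

lemma pLoc_nonneg (n : ℕ) (x : ZMod n → ZMod 2) (i : ZMod n) (b : ZMod 2) :
    0 ≤ pLoc n x i b := by
  unfold pLoc; split_ifs <;> norm_num

lemma ptrans_nonneg (n : ℕ) [NeZero n] (x y : ZMod n → ZMod 2) : 0 ≤ ptrans n x y :=
  Finset.prod_nonneg fun i _ => pLoc_nonneg n x i (y i)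

lemma ptrans_pos (n : ℕ) [NeZero n] (x y : ZMod n → ZMod 2)
    (h : ∀ i, x (i - 1) = x (i + 1) → y i = x (i - 1) + x i) :
    0 < ptrans n x y := by
  apply Finset.prod_pos
  intro i _
  unfold pLoc
  split_ifs with h1 h2
  · norm_num
  · exact absurd (h i h1) h2
  · norm_num

/-- Key construction: a configuration `a` reachable in one step from `x`
(i.e. matching all forced values) all of whose runs have length ≥ 2. -/
lemma exists_good (n : ℕ) [NeZero n] (x : ZMod n → ZMod 2) :
    ∃ a : ZMod n → ZMod 2,
      (∀ i, x (i - 1) = x (i + 1) → a i = x (i - 1) + x i) ∧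
      (∀ i, a (i - 1) = a i ∨ a i = a (i + 1)) := by
  set u : ZMod n → ZMod 2 := fun i => x i + x (i + 1) with hu
  have hux : ∀ i : ZMod n, u (i - 1) = x (i - 1) + x i := by
    intro i; simp [hu, sub_add_cancel]
  have hforced : ∀ i : ZMod n, x (i - 1) = x (i + 1) → u (i - 1) = u i := by
    intro i h
    rw [hux, hu]
    simp only
    rw [h, add_comm]
  by_cases hF : ∃ j : ZMod n, u (j - 1) = u j
  · -- there exists a forced site; propagate its value leftward-to-right
    have hEx : ∀ i : ZMod n, ∃ k : ℕ, u (i - (k : ZMod n) - 1) = u (i - (k : ZMod n)) := by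
      obtain ⟨j, hj⟩ := hF
      intro i
      refine ⟨(i - j).val, ?_⟩
      have hv : (((i - j).val : ℕ) : ZMod n) = i - j := ZMod.natCast_rightInverse (i - j)
      rw [hv]
      simpa using hj
    set s : ZMod n → ZMod 2 := fun i => u (i - (Nat.find (hEx i) : ZMod n)) with hs
    -- property 1 : forced sites take their forced value
    have hP1 : ∀ i : ZMod n, u (i - 1) = u i → s i = u i := by
      intro i h
      have h0 : Nat.find (hEx i) = 0 := by
        rw [Nat.find_eq_zero]
        simpa using h
      rw [hs]
      simp only [h0]
      norm_num
    -- property 2 : unforced sites copy their left neighbour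
    have hP2 : ∀ i : ZMod n, ¬ u (i - 1) = u i → s i = s (i - 1) := by
      intro i h
      have hK0 : Nat.find (hEx i) ≠ 0 := by
        intro h0
        apply h
        have := Nat.find_spec (hEx i)
        rw [h0] at this
        simpa using this
      obtain ⟨K, hK⟩ := Nat.exists_eq_succ_of_ne_zero hK0
      have harg : ∀ m : ℕ, (i - 1) - ((m : ℕ) : ZMod n) = i - (((m + 1 : ℕ)) : ZMod n) := by
        intro m; push_cast; ring
      have hfind : Nat.find (hEx (i - 1)) = K := by
        rw [Nat.find_eq_iff]
        constructor
        · have hspec := Nat.find_spec (hEx i)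
          rw [hK] at hspec
          rw [harg K]
          exact hspec
        · intro m hm hPm
          have hmin := Nat.find_min (hEx i) (show m + 1 < Nat.find (hEx i) by omega)
          apply hmin
          rw [← harg m]
          exact hPm
      rw [hs]
      simp only [hfind, hK]
      congr 1
      push_cast
      ring
    refine ⟨s, ?_, ?_⟩
    · intro i hx
      have hf := hforced i hx
      rw [hP1 i hf, ← hf, hux]
    · intro i
      by_cases h1 : u ((i + 1) - 1) = u (i + 1)
      · -- site i+1 forced
        have h1' : u i = u (i + 1) := by simpa using h1
        by_cases h2 : u (i - 1) = u i
        · right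
          rw [hP1 i h2, hP1 (i + 1) h1, h1']
        · left
          exact (hP2 i h2).symm
      · right
        have := hP2 (i + 1) h1
        rw [this]
        simp
  · -- no forced site: everything is free, take the all-zero configuration
    refine ⟨fun _ => 0, ?_, fun i => Or.inl rfl⟩
    intro i hx
    exact absurd ⟨i, hforced i hx⟩ hF

/-- Theorem 1: from any initial configuration, the all-zero configuration is
reached in four steps with strictly positive probability. -/
theorem four_step_reachability (n : ℕ) [NeZero n] (hn : 5 ≤ n)
    (x : ZMod n → ZMod 2) :
    0 < ptrans4 n x (fun _ => 0) := by
  obtain ⟨a, ha, hg⟩ := exists_good n x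
  have h1 : 0 < ptrans n x a := ptrans_pos n x a ha
  have h2 : 0 < ptrans n a (fun _ => 0) := by
    apply ptrans_pos
    intro i hf
    rcases hg i with h | h
    · rw [h]
      exact (zmod2_add_self (a i)).symm
    · rw [hf, ← h]
      exact (zmod2_add_self (a i)).symm
  have h3 : 0 < ptrans n (fun _ => 0) (fun _ => 0) := by
    apply ptrans_pos
    intro i _
    simp
  have hnn : ∀ y z : ZMod n → ZMod 2, 0 ≤ ptrans n y z := ptrans_nonneg n
  unfold ptrans4
  apply Finset.sum_pos'
  · intro b _
    apply Finset.sum_nonneg; intro c _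
    apply Finset.sum_nonneg; intro d _
    exact mul_nonneg (mul_nonneg (mul_nonneg (hnn _ _) (hnn _ _)) (hnn _ _)) (hnn _ _)
  · refine ⟨a, Finset.mem_univ a, ?_⟩
    apply Finset.sum_pos'
    · intro c _
      apply Finset.sum_nonneg; intro d _
      exact mul_nonneg (mul_nonneg (mul_nonneg (hnn _ _) (hnn _ _)) (hnn _ _)) (hnn _ _)
    · refine ⟨fun _ => 0, Finset.mem_univ _, ?_⟩
      apply Finset.sum_pos'
      · intro d _
        exact mul_nonneg (mul_nonneg (mul_nonneg (hnn _ _) (hnn _ _)) (hnn _ _)) (hnn _ _)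
      · refine ⟨fun _ => 0, Finset.mem_univ _, ?_⟩
        exact mul_pos (mul_pos (mul_pos h1 h2) h3) h3
end

section
/- For the λ=1/2 diploid PCA on (Z/2Z)^(Z/nZ), n ≥ 5, the all-zero configuration is the unique absorbing state: if y is a configuration with p(y,y) = 1, then y is identically zero. -/
open Finset

/-- The all-zero configuration is the unique absorbing state of the λ = 1/2
diploid PCA. -/
theorem zero_unique_absorbing (n : ℕ) [NeZero n] (hn : 5 ≤ n)
    (y : ZMod n → ZMod 2) (hy : ptrans n y y = 1) :
    y = fun _ => 0 := by
  have h0 : ∀ j : ZMod n, 0 ≤ pLoc n y j (y j) := by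
    intro j; unfold pLoc; split_ifs <;> norm_num
  have h1 : ∀ j : ZMod n, pLoc n y j (y j) ≤ 1 := by
    intro j; unfold pLoc; split_ifs <;> norm_num
  have hfac : ∀ i : ZMod n, pLoc n y i (y i) = 1 := by
    intro i
    have hsplit : ptrans n y y
        = pLoc n y i (y i) * ∏ j ∈ Finset.univ.erase i, pLoc n y j (y j) := by
      rw [ptrans, ← Finset.mul_prod_erase _ _ (Finset.mem_univ i)]
    have hrest1 : ∏ j ∈ Finset.univ.erase i, pLoc n y j (y j) ≤ 1 :=
      Finset.prod_le_one (fun j _ => h0 j) (fun j _ => h1 j)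
    have hrest0 : 0 ≤ ∏ j ∈ Finset.univ.erase i, pLoc n y j (y j) :=
      Finset.prod_nonneg (fun j _ => h0 j)
    nlinarith [h0 i, h1 i]
  funext j
  have hf := hfac (j + 1)
  unfold pLoc at hf
  have hsub : (j + 1 : ZMod n) - 1 = j := by ring
  rw [hsub] at hf
  split_ifs at hf with h hb
  · linear_combination -hb
  · norm_num at hf
  · norm_num at hf
end

section
/- For the λ=1/2 diploid PCA, if x : Z/nZ → Z/2Z satisfies x_i = 0 for all i ∈ {2,...,n-3} (n ≥ 8), then there exists a configuration y with y_j = x_{j-1} ⊕ x_j at every deterministic site j, such that every triple of y centered at a site in {n-2, n-1, 0, 1} is admissible (not (0,1,0) and not (1,0,1)); moreover y_i = 0 for all i ∈ {3, ..., n-4}. -/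
/-- Choice of boundary values `(p,q,r,s,t,u)` (sites `n-3,…,2`) from
`(a,b,c,d) = (x_{n-2}, x_{n-1}, x_0, x_1)`. -/
def pick (a b c d : ZMod 2) :
    ZMod 2 × ZMod 2 × ZMod 2 × ZMod 2 × ZMod 2 × ZMod 2 :=
  (if a = 0 then (if b = 0 then (if c = 0 then (if d = 0 then (0, 0, 0, 0, 0, 0) else (0, 0, 0, 0, 1, 1)) else (if d = 0 then (0, 0, 0, 1, 1, 0) else (0, 0, 0, 0, 0, 0))) else (if c = 0 then (if d = 0 then (0, 0, 1, 1, 0, 0) else (0, 0, 1, 1, 1, 0)) else (if d = 0 then (0, 0, 0, 0, 0, 0) else (0, 0, 0, 0, 0, 0)))) else (if b = 0 then (if c = 0 then (if d = 0 then (0, 1, 1, 0, 0, 0) else (0, 1, 1, 1, 1, 0)) else (if d = 0 then (0, 1, 1, 1, 0, 0) else (0, 1, 1, 0, 0, 0))) else (if c = 0 then (if d = 0 then (0, 0, 0, 0, 0, 0) else (0, 0, 0, 1, 1, 0)) else (if d = 0 then (0, 0, 0, 0, 0, 0) else (0, 0, 0, 0, 0, 0)))))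

lemma pick_spec (a b c d : ZMod 2) :
    (a = 0 → (pick a b c d).1 = 0) ∧
    (b = 0 → (pick a b c d).2.1 = a) ∧
    (a = c → (pick a b c d).2.2.1 = a + b) ∧
    (b = d → (pick a b c d).2.2.2.1 = b + c) ∧
    (c = 0 → (pick a b c d).2.2.2.2.1 = d) ∧
    (d = 0 → (pick a b c d).2.2.2.2.2 = 0) ∧
    Admissible (pick a b c d).1 (pick a b c d).2.1 (pick a b c d).2.2.1 ∧
    Admissible (pick a b c d).2.1 (pick a b c d).2.2.1 (pick a b c d).2.2.2.1 ∧
    Admissible (pick a b c d).2.2.1 (pick a b c d).2.2.2.1 (pick a b c d).2.2.2.2.1 ∧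
    Admissible (pick a b c d).2.2.2.1 (pick a b c d).2.2.2.2.1 (pick a b c d).2.2.2.2.2 := by
  revert a b c d; decide

lemma cast_inj_of_lt {n k m : ℕ} [NeZero n] (hk : k < n) (hm : m < n)
    (h : (k : ZMod n) = (m : ZMod n)) : k = m := by
  have := congrArg ZMod.val h
  rwa [ZMod.val_natCast_of_lt hk, ZMod.val_natCast_of_lt hm] at this

/-- Lemma 4 (boundary lemma): if `x` vanishes on the bulk `{2,…,n-3}`, there is
an update `y` making all triples centered at `n-2, n-1, 0, 1` admissible, and
vanishing on `{3,…,n-4}`. -/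
theorem boundary_lemma (n : ℕ) (hn : 8 ≤ n) (x : ZMod n → ZMod 2)
    (hbulk : ∀ i : ℕ, 2 ≤ i → i ≤ n - 3 → x (i : ZMod n) = 0) :
    ∃ y : ZMod n → ZMod 2,
      (∀ j : ZMod n, IsDet n x j → y j = x (j - 1) + x j) ∧
      (∀ i : ZMod n,
        (i = ((n - 2 : ℕ) : ZMod n) ∨ i = ((n - 1 : ℕ) : ZMod n) ∨ i = 0 ∨ i = 1) →
        Admissible (y (i - 1)) (y i) (y (i + 1))) ∧
      (∀ i : ℕ, 3 ≤ i → i ≤ n - 4 → y (i : ZMod n) = 0) := by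
  haveI : NeZero n := ⟨by omega⟩
  set a := x ((n - 2 : ℕ) : ZMod n) with ha
  set b := x ((n - 1 : ℕ) : ZMod n) with hb
  set c := x ((0 : ℕ) : ZMod n) with hc
  set d := x ((1 : ℕ) : ZMod n) with hd
  obtain ⟨hP, hQ, hR, hS, hT, hU, A1, A2, A3, A4⟩ := pick_spec a b c d
  set p := (pick a b c d).1
  set q := (pick a b c d).2.1
  set r := (pick a b c d).2.2.1
  set s := (pick a b c d).2.2.2.1
  set t := (pick a b c d).2.2.2.2.1
  set u := (pick a b c d).2.2.2.2.2
  have key : ∀ k : ℕ, k + 1 ≤ n → ((k : ZMod n) : ZMod n) + 1 = (((k+1 : ℕ)) : ZMod n) := by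
    intro k _; push_cast; ring
  have e34 : ((n - 4 : ℕ) : ZMod n) + 1 = ((n - 3 : ℕ) : ZMod n) := by
    rw [key (n-4) (by omega)]; congr 1; omega
  have e43 : ((n - 3 : ℕ) : ZMod n) - 1 = ((n - 4 : ℕ) : ZMod n) := by
    rw [eq_comm, eq_sub_iff_add_eq, e34]
  have e32 : ((n - 3 : ℕ) : ZMod n) + 1 = ((n - 2 : ℕ) : ZMod n) := by
    rw [key (n-3) (by omega)]; congr 1; omega
  have e23 : ((n - 2 : ℕ) : ZMod n) - 1 = ((n - 3 : ℕ) : ZMod n) := by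
    rw [eq_comm, eq_sub_iff_add_eq, e32]
  have e21 : ((n - 2 : ℕ) : ZMod n) + 1 = ((n - 1 : ℕ) : ZMod n) := by
    rw [key (n-2) (by omega)]; congr 1; omega
  have e12 : ((n - 1 : ℕ) : ZMod n) - 1 = ((n - 2 : ℕ) : ZMod n) := by
    rw [eq_comm, eq_sub_iff_add_eq, e21]
  have e10 : ((n - 1 : ℕ) : ZMod n) + 1 = 0 := by
    rw [key (n-1) (by omega)]
    have h : n - 1 + 1 = n := by omega
    rw [h, ZMod.natCast_self]
  have e01 : (0 : ZMod n) - 1 = ((n - 1 : ℕ) : ZMod n) := by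
    rw [eq_comm, eq_sub_iff_add_eq, e10]
  have c0 : ((0 : ℕ) : ZMod n) = 0 := by norm_cast
  have c1 : ((1 : ℕ) : ZMod n) = 1 := by norm_cast
  have c2 : ((2 : ℕ) : ZMod n) = 2 := by norm_cast
  have c3 : ((3 : ℕ) : ZMod n) = 3 := by norm_cast
  have f01 : ((0 : ℕ) : ZMod n) - 1 = ((n - 1 : ℕ) : ZMod n) := by rw [c0]; exact e01
  have f02 : ((0 : ℕ) : ZMod n) + 1 = ((1 : ℕ) : ZMod n) := by rw [c0, c1]; ring
  have f11 : ((1 : ℕ) : ZMod n) - 1 = ((0 : ℕ) : ZMod n) := by rw [c0, c1]; ring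
  have f12 : ((1 : ℕ) : ZMod n) + 1 = ((2 : ℕ) : ZMod n) := by rw [c1, c2]; ring
  have f21 : ((2 : ℕ) : ZMod n) - 1 = ((1 : ℕ) : ZMod n) := by rw [c1, c2]; ring
  have f22 : ((2 : ℕ) : ZMod n) + 1 = ((3 : ℕ) : ZMod n) := by rw [c2, c3]; ring
  have ne : ∀ k m : ℕ, k < n → m < n → k ≠ m → (k : ZMod n) ≠ (m : ZMod n) := by
    intro k m hk hm hne h; exact hne (cast_inj_of_lt hk hm h)
  set Y : ZMod n → ZMod 2 := fun j =>
    if j = ((n - 3 : ℕ) : ZMod n) then p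
    else if j = ((n - 2 : ℕ) : ZMod n) then q
    else if j = ((n - 1 : ℕ) : ZMod n) then r
    else if j = ((0 : ℕ) : ZMod n) then s
    else if j = ((1 : ℕ) : ZMod n) then t
    else if j = ((2 : ℕ) : ZMod n) then u
    else 0 with hY
  have Y3 : Y ((n - 3 : ℕ) : ZMod n) = p := by rw [hY]; simp
  have Y2 : Y ((n - 2 : ℕ) : ZMod n) = q := by
    rw [hY]; simp only
    rw [if_neg (ne _ _ (by omega) (by omega) (by omega))]; simp
  have Y1 : Y ((n - 1 : ℕ) : ZMod n) = r := by
    rw [hY]; simp only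
    rw [if_neg (ne _ _ (by omega) (by omega) (by omega)),
        if_neg (ne _ _ (by omega) (by omega) (by omega))]; simp
  have Y0 : Y ((0 : ℕ) : ZMod n) = s := by
    rw [hY]; simp only
    rw [if_neg (ne _ _ (by omega) (by omega) (by omega)),
        if_neg (ne _ _ (by omega) (by omega) (by omega)),
        if_neg (ne _ _ (by omega) (by omega) (by omega))]; simp
  have Yo : Y ((1 : ℕ) : ZMod n) = t := by
    rw [hY]; simp only
    rw [if_neg (ne _ _ (by omega) (by omega) (by omega)),
        if_neg (ne _ _ (by omega) (by omega) (by omega)),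
        if_neg (ne _ _ (by omega) (by omega) (by omega)),
        if_neg (ne _ _ (by omega) (by omega) (by omega))]; simp
  have Yt : Y ((2 : ℕ) : ZMod n) = u := by
    rw [hY]; simp only
    rw [if_neg (ne _ _ (by omega) (by omega) (by omega)),
        if_neg (ne _ _ (by omega) (by omega) (by omega)),
        if_neg (ne _ _ (by omega) (by omega) (by omega)),
        if_neg (ne _ _ (by omega) (by omega) (by omega)),
        if_neg (ne _ _ (by omega) (by omega) (by omega))]; simp
  have Ybulk : ∀ k : ℕ, 3 ≤ k → k ≤ n - 4 → Y ((k : ℕ) : ZMod n) = 0 := by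
    intro k h3 h4
    rw [hY]; simp only
    rw [if_neg (ne _ _ (by omega) (by omega) (by omega)),
        if_neg (ne _ _ (by omega) (by omega) (by omega)),
        if_neg (ne _ _ (by omega) (by omega) (by omega)),
        if_neg (ne _ _ (by omega) (by omega) (by omega)),
        if_neg (ne _ _ (by omega) (by omega) (by omega)),
        if_neg (ne _ _ (by omega) (by omega) (by omega))]
  refine ⟨Y, ?_, ?_, ?_⟩
  · intro j hj
    have hjv : ((j.val : ℕ) : ZMod n) = j := by simp [ZMod.natCast_val]
    have hjn : j.val < n := ZMod.val_lt j
    unfold IsDet at hj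
    rw [← hjv] at hj ⊢
    have hcase : j.val = 0 ∨ j.val = 1 ∨ j.val = 2 ∨ (3 ≤ j.val ∧ j.val ≤ n - 4) ∨
        j.val = n - 3 ∨ j.val = n - 2 ∨ j.val = n - 1 := by omega
    rcases hcase with hv | hv | hv | ⟨h3, h4⟩ | hv | hv | hv
    · rw [hv] at hj ⊢
      rw [f01, f02] at hj
      have hd' : b = d := by rw [hb, hd, hj]
      rw [f01, Y0, hS hd', hb, hc]
    · rw [hv] at hj ⊢
      rw [f11, f12] at hj
      rw [f11]
      have hc' : c = 0 := by rw [hc, hj]; exact hbulk 2 le_rfl (by omega)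
      rw [Yo, hT hc', ← hc, ← hd, hc', zero_add]
    · rw [hv] at hj ⊢
      rw [f21, f22] at hj
      rw [f21]
      have hd' : d = 0 := by rw [hd, hj]; exact hbulk 3 (by omega) (by omega)
      rw [Yt, hU hd', ← hd, hd', hbulk 2 le_rfl (by omega), zero_add]
    · rw [show ((j.val : ℕ) : ZMod n) - 1 = (((j.val - 1 : ℕ)) : ZMod n) by
          rw [eq_comm, eq_sub_iff_add_eq, key (j.val - 1) (by omega)]; congr 1; omega]
      rw [Ybulk j.val h3 h4, hbulk (j.val - 1) (by omega) (by omega),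
          hbulk j.val (by omega) (by omega), zero_add]
    · rw [hv] at hj ⊢
      rw [e43, e32] at hj
      have ha' : a = 0 := by rw [ha, ← hj]; exact hbulk (n-4) (by omega) (by omega)
      rw [e43, Y3, hP ha', hbulk (n-4) (by omega) (by omega),
          hbulk (n-3) (by omega) (by omega), zero_add]
    · rw [hv] at hj ⊢
      rw [e23, e21] at hj
      have hb' : b = 0 := by rw [hb, ← hj]; exact hbulk (n-3) (by omega) (by omega)
      rw [e23, Y2, hQ hb', hbulk (n-3) (by omega) (by omega), zero_add, ha]
    · rw [hv] at hj ⊢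
      rw [e12, e10, ← c0] at hj
      have ha' : a = c := by rw [ha, hc, hj]
      rw [e12, Y1, hR ha', ha, hb]
  · intro i hi
    rcases hi with hi | hi | hi | hi
    · rw [hi, e23, e21, Y3, Y2, Y1]; exact A1
    · rw [hi, e12, e10, ← c0, Y2, Y1, Y0]; exact A2
    · rw [hi, e01, show (0 : ZMod n) + 1 = ((1 : ℕ) : ZMod n) by rw [c1]; exact zero_add 1,
          ← c0, Y1, Y0, Yo]
      exact A3
    · rw [hi, show (1 : ZMod n) - 1 = ((0 : ℕ) : ZMod n) by rw [c0]; ring,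
          show (1 : ZMod n) + 1 = ((2 : ℕ) : ZMod n) by rw [c2]; ring,
          ← c1, Y0, Yo, Yt]
      exact A4
  · exact Ybulk
end
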